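/- In a graph G with minimum degree at least 2, every path Q of G is contained in a lollipop, i.e., there exists a pair (P, C) where P is a path, C is a cycle, P and C share exactly one vertex which is an endpoint of P, and all vertices of Q belong to V(P) ∪ V(C). -/

import Mathlib

open SimpleGraph

/-- Extend a path until all neighbors of its endpoint lie on its support. -/
lemma lollipop_extend {V : Type*} [Fintype V] (G : SimpleGraph V) [DecidableRel G.Adj] :
    ∀ (n : ℕ) {a b : V} (R : G.Walk a b), R.IsPath →
      Fintype.card V ≤ R.support.length + n →
      ∃ (b' : V) (R' : G.Walk a b'), R'.IsPath ∧
        (∀ z ∈ R.support, z ∈ R'.support) ∧ (∀ w, G.Adj b' w → w ∈ R'.support) := by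
  classical
  intro n
  induction n with
  | zero =>
    intro a b R hR hlen
    refine ⟨b, R, hR, fun z hz => hz, fun w _ => ?_⟩
    have hnd : R.support.Nodup := hR.support_nodup
    have hcard : R.support.toFinset.card = R.support.length :=
      List.toFinset_card_of_nodup hnd
    have : R.support.toFinset = Finset.univ := by
      apply Finset.eq_univ_of_card
      have h1 : R.support.toFinset.card ≤ Fintype.card V := Finset.card_le_univ _
      omega
    have : w ∈ R.support.toFinset := this ▸ Finset.mem_univ w
    simpa using this
  | succ n ih =>
    intro a b R hR hlen
    by_cases hall : ∀ w, G.Adj b w → w ∈ R.support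
    · exact ⟨b, R, hR, fun z hz => hz, hall⟩
    · push_neg at hall
      obtain ⟨w, hadj, hw⟩ := hall
      have hR' : (R.concat hadj).IsPath := by
        rw [SimpleGraph.Walk.isPath_def, SimpleGraph.Walk.support_concat,
          List.nodup_append]
        exact ⟨hR.support_nodup, List.nodup_singleton w,
          fun z hz y hy heq => hw (by rw [List.mem_singleton] at hy; rw [← hy, ← heq]; exact hz)⟩
      have hlen' : Fintype.card V ≤ (R.concat hadj).support.length + n := by
        rw [SimpleGraph.Walk.support_concat, List.length_append, List.length_singleton]
        omega
      obtain ⟨b', R', h1, h2, h3⟩ := ih (R.concat hadj) hR' hlen'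
      refine ⟨b', R', h1, fun z hz => h2 z ?_, h3⟩
      rw [SimpleGraph.Walk.support_concat]
      exact List.mem_append_left _ hz

/-- A maximal path yields a lollipop covering it. -/
lemma lollipop_of_maximal {V : Type*} [Fintype V] (G : SimpleGraph V) [DecidableRel G.Adj]
    (hdeg : ∀ v : V, 2 ≤ G.degree v) {b' a : V} (RR : G.Walk b' a) (hRR : RR.IsPath)
    (hnbr : ∀ w, G.Adj b' w → w ∈ RR.support) :
    ∃ (p c : V) (P : G.Walk p c) (C : G.Walk c c),
      P.IsPath ∧ C.IsCycle ∧
      (∀ x : V, x ∈ P.support → x ∈ C.support → x = c) ∧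
      (∀ x ∈ RR.support, x ∈ P.support ∨ x ∈ C.support) := by
  classical
  cases RR with
  | nil =>
    exfalso
    have hpos : 0 < G.degree b' := lt_of_lt_of_le (by norm_num) (hdeg b')
    rw [SimpleGraph.degree_pos_iff_exists_adj] at hpos
    obtain ⟨w, hw⟩ := hpos
    have := hnbr w hw
    simp only [SimpleGraph.Walk.support_nil, List.mem_singleton] at this
    exact hw.ne' this
  | @cons _ y _ h T =>
    rw [SimpleGraph.Walk.cons_isPath_iff] at hRR
    obtain ⟨hT, hb'T⟩ := hRR
    -- find a neighbor x of b' distinct from y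
    have hcard : 1 < (G.neighborFinset b').card := by
      have := hdeg b'
      rw [← SimpleGraph.card_neighborFinset_eq_degree] at this
      omega
    obtain ⟨x, hxmem, hxy⟩ := Finset.exists_mem_ne hcard y
    rw [SimpleGraph.mem_neighborFinset] at hxmem
    have hxb' : x ≠ b' := hxmem.ne'
    have hxT : x ∈ T.support := by
      have := hnbr x hxmem
      rw [SimpleGraph.Walk.support_cons, List.mem_cons] at this
      exact this.resolve_left hxb'
    set S₀ := T.takeUntil x hxT with hS₀
    set P := T.dropUntil x hxT with hP
    have hspec : S₀.append P = T := T.take_spec hxT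
    have hS₀path : S₀.IsPath := hT.takeUntil hxT
    have hPpath : P.IsPath := hT.dropUntil hxT
    have hb'S₀ : b' ∉ S₀.support := fun hmem => hb'T (T.support_takeUntil_subset hxT hmem)
    have hb'P : b' ∉ P.support := fun hmem => hb'T (T.support_dropUntil_subset hxT hmem)
    -- the cycle
    have hC : (SimpleGraph.Walk.cons hxmem.symm (SimpleGraph.Walk.cons h S₀)).IsCycle := by
      rw [SimpleGraph.Walk.cons_isCycle_iff]
      constructor
      · rw [SimpleGraph.Walk.cons_isPath_iff]
        exact ⟨hS₀path, hb'S₀⟩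
      · rw [SimpleGraph.Walk.edges_cons, List.mem_cons]
        rintro (heq | hmem)
        · rw [Sym2.eq_iff] at heq
          rcases heq with ⟨h1, h2⟩ | ⟨h1, h2⟩
          · exact hxb' h1
          · exact hxy h1
        · exact hb'S₀ (S₀.snd_mem_support_of_mem_edges hmem)
    set C := SimpleGraph.Walk.cons hxmem.symm (SimpleGraph.Walk.cons h S₀) with hCdef
    have hCsupp : C.support = x :: b' :: S₀.support := by
      simp [hCdef, SimpleGraph.Walk.support_cons]
    -- disjointness of supports
    have hTnodup : T.support.Nodup := hT.support_nodup
    have hTsplit : T.support = S₀.support ++ P.support.tail := by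
      conv_lhs => rw [← hspec]
      exact SimpleGraph.Walk.support_append S₀ P
    have hdisj : ∀ z, z ∈ S₀.support → z ∈ P.support.tail → False := by
      rw [hTsplit, List.nodup_append] at hTnodup
      exact fun z h1 h2 => hTnodup.2.2 z h1 z h2 rfl
    refine ⟨a, x, P.reverse, C, hPpath.reverse, hC, ?_, ?_⟩
    · intro z hzP hzC
      rw [SimpleGraph.Walk.support_reverse, List.mem_reverse] at hzP
      rw [hCsupp, List.mem_cons, List.mem_cons] at hzC
      rcases hzC with rfl | rfl | hzS₀
      · rfl
      · exact absurd hzP hb'P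
      · rcases (by rw [P.support_eq_cons, List.mem_cons] at hzP; exact hzP :
          z = x ∨ z ∈ P.support.tail) with rfl | hzt
        · rfl
        · exact absurd (hdisj z hzS₀ hzt) not_false
    · intro z hz
      rw [SimpleGraph.Walk.support_cons, List.mem_cons] at hz
      rcases hz with rfl | hzT
      · right; rw [hCsupp]; simp
      · rw [← hspec, SimpleGraph.Walk.mem_support_append_iff] at hzT
        rcases hzT with hzS₀ | hzP
        · right; rw [hCsupp]; simp [hzS₀]
        · left; rw [SimpleGraph.Walk.support_reverse, List.mem_reverse]; exact hzP

/-- In a graph with minimum degree at least 2, every path is contained in a lollipop: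
a pair `(P, C)` of a path `P` and a cycle `C` sharing exactly one vertex, which is an
endpoint of `P`, such that all vertices of `Q` lie in `V(P) ∪ V(C)`. -/
theorem path_contained_in_lollipop {V : Type*} [Fintype V]
    (G : SimpleGraph V) [DecidableRel G.Adj]
    (hdeg : ∀ v : V, 2 ≤ G.degree v)
    {a b : V} (Q : G.Walk a b) (hQ : Q.IsPath) :
    ∃ (p c : V) (P : G.Walk p c) (C : G.Walk c c),
      P.IsPath ∧ C.IsCycle ∧
      (∀ x : V, x ∈ P.support → x ∈ C.support → x = c) ∧
      (∀ x ∈ Q.support, x ∈ P.support ∨ x ∈ C.support) := by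
  obtain ⟨b', R, hR, hsub, hnbr⟩ :=
    lollipop_extend G (Fintype.card V) Q hQ (by omega)
  have hRRpath : R.reverse.IsPath := hR.reverse
  have hnbr' : ∀ w, G.Adj b' w → w ∈ R.reverse.support := fun w hw => by
    rw [SimpleGraph.Walk.support_reverse, List.mem_reverse]; exact hnbr w hw
  obtain ⟨p, c, P, C, h1, h2, h3, h4⟩ := lollipop_of_maximal G hdeg R.reverse hRRpath hnbr'
  refine ⟨p, c, P, C, h1, h2, h3, fun z hz => h4 z ?_⟩
  rw [SimpleGraph.Walk.support_reverse, List.mem_reverse]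
  exact hsub z hz
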